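/- Let b ∈ ℝ and m ∈ ℕ. Then the (2m)-th derivative at s = 0 of the function s ↦ exp((1/2)·b·s²) equals (2m)! / (m! · 2^m) · b^m, and the (2m+1)-th derivative at s = 0 of this function equals 0. (This is the contraction with t^{⊗n} of the paper's formula for the n-th order central moments of a multivariate normal distribution with covariance Σ, where b = t'Σt.) -/

import Mathlib

open FormalMultilinearSeries NormedSpace in
lemma iteratedDeriv_exp_mul_sq (c : ℝ) (n : ℕ) :
    iteratedDeriv n (fun s : ℝ => Real.exp (c * s ^ 2)) 0 =
      (n.factorial : ℝ) * (if Even n then c ^ (n / 2) / ((n / 2).factorial : ℝ) else 0) := by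
  set a : ℕ → ℝ := fun n => if Even n then c ^ (n / 2) / ((n / 2).factorial : ℝ) else 0 with ha
  set p : FormalMultilinearSeries ℝ ℝ ℝ := ofScalars ℝ a with hp
  have hinj : Function.Injective (fun m : ℕ => 2 * m) := fun x y h => by
    simp only at h; omega
  have hsupp : ∀ x : ℝ, ∀ n ∉ Set.range (fun m : ℕ => 2 * m), a n * x ^ n = 0 := by
    intro x n hn
    have : ¬ Even n := by
      rintro ⟨k, hk⟩; exact hn ⟨k, show 2 * k = n by omega⟩
    simp [ha, this]
  have key : ∀ x : ℝ, HasSum (fun n => a n * x ^ n) (Real.exp (c * x ^ 2)) := by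
    intro x
    rw [← Function.Injective.hasSum_iff hinj (hsupp x)]
    have h1 : HasSum (fun m : ℕ => (c * x ^ 2) ^ m / m.factorial) (Real.exp (c * x ^ 2)) := by
      rw [Real.exp_eq_exp_ℝ]
      exact expSeries_div_hasSum_exp (c * x ^ 2)
    convert h1 using 2 with m
    simp only [ha, Function.comp_apply]
    rw [if_pos ⟨m, by omega⟩]
    have : 2 * m / 2 = m := by omega
    rw [this, mul_pow, ← pow_mul]
    ring
  have happ : ∀ (n : ℕ) (y : ℝ), (p n fun _ => y) = a n * y ^ n := by
    intro n y
    rw [hp, ofScalars_apply_eq, smul_eq_mul]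
  have hball : HasFPowerSeriesOnBall (fun s : ℝ => Real.exp (c * s ^ 2)) p 0 ⊤ := by
    refine ⟨?_, by simp, ?_⟩
    · rw [p.radius_eq_top_of_summable_norm]
      intro r
      have h1 : Summable (fun m : ℕ => (|c| * (r : ℝ) ^ 2) ^ m / m.factorial) :=
        (expSeries_div_hasSum_exp (|c| * (r : ℝ) ^ 2)).summable
      have h2 : Summable (fun n : ℕ => |a n| * (r : ℝ) ^ n) := by
        rw [← Function.Injective.summable_iff hinj (by
          intro n hn
          have : ¬ Even n := by
            rintro ⟨k, hk⟩; exact hn ⟨k, show 2 * k = n by omega⟩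
          simp [ha, this])]
        refine h1.congr fun m => ?_
        simp only [ha, Function.comp_apply]
        rw [if_pos ⟨m, by omega⟩]
        have : 2 * m / 2 = m := by omega
        rw [this, mul_pow, ← pow_mul, abs_div, abs_pow, Nat.abs_cast]
        ring
      refine h2.congr fun n => ?_
      rw [hp, ofScalars_norm, Real.norm_eq_abs]
    · intro y _
      simp only [happ, zero_add]
      exact key y
  have hfact := hball.factorial_smul (f := fun s : ℝ => Real.exp (c * s ^ 2)) 1 n
  rw [iteratedDeriv_eq_iteratedFDeriv, ← hfact, happ, one_pow, mul_one, nsmul_eq_mul]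

/-- The `(2m)`-th derivative at `s = 0` of `s ↦ exp(b s²/2)` equals
`(2m)!/(m! 2^m) b^m`, and the `(2m+1)`-th derivative at `s = 0` equals `0`.
(This is the contraction with `t^{⊗n}` of the formula for the `n`-th central
moments of a multivariate normal distribution with covariance `Σ`, `b = t'Σt`.) -/
theorem normal_central_moment_scalar (b : ℝ) (m : ℕ) :
    iteratedDeriv (2 * m) (fun s : ℝ => Real.exp (1 / 2 * b * s ^ 2)) 0 =
        ((2 * m).factorial : ℝ) / ((m.factorial : ℝ) * 2 ^ m) * b ^ m ∧
      iteratedDeriv (2 * m + 1) (fun s : ℝ => Real.exp (1 / 2 * b * s ^ 2)) 0 = 0 := by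
  constructor
  · rw [iteratedDeriv_exp_mul_sq (1 / 2 * b) (2 * m), if_pos (even_two_mul m)]
    have h2 : 2 * m / 2 = m := by omega
    rw [h2, mul_pow, div_pow, one_pow]
    have hm : ((m.factorial : ℝ)) ≠ 0 := Nat.cast_ne_zero.mpr m.factorial_ne_zero
    have h2m : (2 : ℝ) ^ m ≠ 0 := pow_ne_zero _ two_ne_zero
    field_simp
    try ring
    try tauto
  · rw [iteratedDeriv_exp_mul_sq (1 / 2 * b) (2 * m + 1),
      if_neg (by rw [Nat.even_iff]; omega), mul_zero]
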